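/- arXiv:2205.00553 — 3 statements merged into one kernel-verified Lean document; each statement's English description precedes it below -/
import Mathlib

section
/- Let 1 ≤ a < r be coprime integers with Hirzebruch–Jung continued fraction r/a = [α_1, ..., α_n], and let 1 ≤ a′ < r be the integer with a·a′ ≡ 1 (mod r). Then r/a′ = [α_n, ..., α_1], i.e. the continued fraction of r/a′ is the reversal of that of r/a. -/
/-- Hirzebruch–Jung continued fraction `[α₁, ..., αₙ]`:
`[αₙ] = αₙ` and `[α₁, ..., αₙ] = α₁ - 1/[α₂, ..., αₙ]`. -/
def hjcf : List ℕ → ℚ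
  | [] => 0
  | a :: l => if l.isEmpty then (a : ℚ) else (a : ℚ) - 1 / hjcf l

/-- The matrix `M(α₁)⋯M(αₙ)` with `M(α) = [[α,-1],[1,0]]`, stored as
`(p, q, s, t)` where the matrix is `[[p, -s], [q, -t]]`. -/
def pqst : List ℕ → ℤ × ℤ × ℤ × ℤ
  | [] => (1, 0, 0, -1)
  | a :: l =>
    ((a : ℤ) * (pqst l).1 - (pqst l).2.1, (pqst l).1,
      (a : ℤ) * (pqst l).2.2.1 - (pqst l).2.2.2, (pqst l).2.2.1)

lemma pqst_main : ∀ (L : List ℕ), (∀ x ∈ L, 2 ≤ x) → L ≠ [] →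
    (pqst L).2.1 * (pqst L).2.2.1 - (pqst L).1 * (pqst L).2.2.2 = 1 ∧
    1 ≤ (pqst L).2.1 ∧ (pqst L).2.1 < (pqst L).1 ∧
    0 ≤ (pqst L).2.2.2 ∧ (pqst L).2.2.2 < (pqst L).2.2.1 ∧
    1 ≤ (pqst L).2.1 - (pqst L).2.2.2 ∧
    (pqst L).2.1 - (pqst L).2.2.2 ≤ (pqst L).1 - (pqst L).2.2.1 ∧
    hjcf L = ((pqst L).1 : ℚ) / ((pqst L).2.1 : ℚ) := by
  intro L
  induction L with
  | nil => intro _ h; exact absurd rfl h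
  | cons a l ih =>
    intro hL _
    have ha : (2 : ℤ) ≤ (a : ℤ) := by exact_mod_cast hL a (by simp)
    rcases eq_or_ne l [] with rfl | hlne
    · refine ⟨by simp [pqst], by simp [pqst], by simp [pqst]; omega,
        by simp [pqst], by simp [pqst], by simp [pqst], by simp [pqst]; omega,
        by simp [pqst, hjcf]⟩
    · obtain ⟨hdet, hq1, hqp, ht0, hts, hqt1, hqtps, hcf⟩ :=
        ih (fun x hx => hL x (by simp [hx])) hlne
      simp only [pqst]
      set p := (pqst l).1 with hp
      set q := (pqst l).2.1 with hq
      set s := (pqst l).2.2.1 with hs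
      set t := (pqst l).2.2.2 with ht
      have hps : s < p := by omega
      refine ⟨?_, ?_, ?_, ?_, ?_, ?_, ?_, ?_⟩
      · show p * ((a:ℤ) * s - t) - ((a:ℤ) * p - q) * s = 1
        linear_combination hdet
      · show 1 ≤ p; omega
      · show p < (a:ℤ) * p - q
        nlinarith [mul_le_mul_of_nonneg_right ha (show (0:ℤ) ≤ p by omega)]
      · show 0 ≤ s; omega
      · show s < (a:ℤ) * s - t
        nlinarith [mul_le_mul_of_nonneg_right ha (show (0:ℤ) ≤ s by omega)]
      · show 1 ≤ p - s; omega
      · show p - s ≤ ((a:ℤ) * p - q) - ((a:ℤ) * s - t)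
        nlinarith [mul_le_mul_of_nonneg_right ha (show (0:ℤ) ≤ p - s by omega)]
      · show hjcf (a :: l) = (((a:ℤ) * p - q : ℤ) : ℚ) / ((p : ℤ) : ℚ)
        have hp0 : (p : ℚ) ≠ 0 := by
          have : (0:ℤ) < p := by omega
          exact_mod_cast this.ne'
        simp only [hjcf, List.isEmpty_eq_false_iff.mpr hlne, Bool.false_eq_true, if_false, hcf]
        field_simp
        push_cast
        ring

lemma pqst_append (a : ℕ) : ∀ (l : List ℕ),
    pqst (l ++ [a]) = ((a:ℤ) * (pqst l).1 - (pqst l).2.2.1,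
      (a:ℤ) * (pqst l).2.1 - (pqst l).2.2.2, (pqst l).1, (pqst l).2.1) := by
  intro l
  induction l with
  | nil => simp [pqst]
  | cons x l ih =>
    rw [List.cons_append]
    simp only [pqst, ih]
    refine Prod.ext (by ring) (Prod.ext (by ring) rfl)

lemma pqst_reverse : ∀ (L : List ℕ),
    pqst L.reverse = ((pqst L).1, (pqst L).2.2.1, (pqst L).2.1, (pqst L).2.2.2) := by
  intro L
  induction L with
  | nil => simp [pqst]
  | cons x l ih =>
    simp only [List.reverse_cons, pqst_append, ih, pqst]

/-- If `r/a = [α₁, ..., αₙ]` and `a·a' ≡ 1 (mod r)`, then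
`r/a' = [αₙ, ..., α₁]`. -/
theorem hjcf_reverse (r a a' : ℕ) (h1 : 1 ≤ a) (h2 : a < r)
    (hcop : Nat.Coprime a r) (h1' : 1 ≤ a') (h2' : a' < r)
    (hinv : (a * a') % r = 1)
    (L : List ℕ) (hL : ∀ x ∈ L, 2 ≤ x) (hne : L ≠ [])
    (hcf : hjcf L = (r : ℚ) / (a : ℚ)) :
    hjcf L.reverse = (r : ℚ) / (a' : ℚ) := by
  obtain ⟨hdet, hq1, hqp, ht0, hts, hqt1, hqtps, hcfl⟩ := pqst_main L hL hne
  set p := (pqst L).1 with hp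
  set q := (pqst L).2.1 with hq
  set s := (pqst L).2.2.1 with hs
  set t := (pqst L).2.2.2 with ht
  -- p = r, q = a
  have hp0 : (0:ℤ) < p := by omega
  have hq0 : (0:ℤ) < q := by omega
  have ha0 : (0:ℤ) < (a:ℤ) := by exact_mod_cast h1
  have hr0 : (0:ℤ) < (r:ℤ) := by exact_mod_cast Nat.zero_lt_of_lt h2
  have hpa : p * (a:ℤ) = (r:ℤ) * q := by
    have hpq : (p : ℚ) / (q : ℚ) = (r : ℚ) / (a : ℚ) := hcfl ▸ hcf
    have hqQ : ((q:ℤ) : ℚ) ≠ 0 := by exact_mod_cast hq0.ne'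
    have haQ : ((a:ℕ) : ℚ) ≠ 0 := by exact_mod_cast h1.trans_lt' (by norm_num) |>.ne'
    field_simp at hpq
    exact (by exact_mod_cast hpq : p * (a:ℤ) = q * (r:ℤ)).trans (mul_comm _ _)
  have hcoppq : IsCoprime q p := ⟨s, -t, by linarith [hdet]⟩
  have hcopar : IsCoprime (a:ℤ) (r:ℤ) := by
    rw [Int.isCoprime_iff_gcd_eq_one]
    exact_mod_cast hcop
  have haq : (a:ℤ) = q := by
    have h1 : (a:ℤ) ∣ q := by
      have : (a:ℤ) ∣ (r:ℤ) * q := ⟨p, by linarith⟩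
      exact (IsCoprime.dvd_of_dvd_mul_left hcopar this)
    have h2 : q ∣ (a:ℤ) := by
      have : q ∣ p * (a:ℤ) := ⟨(r:ℤ), by linarith⟩
      exact (IsCoprime.dvd_of_dvd_mul_left hcoppq this)
    exact Int.dvd_antisymm ha0.le hq0.le h1 h2
  have hpr : p = (r:ℤ) := by
    rw [← haq] at hpa
    exact mul_right_cancel₀ ha0.ne' (by linarith)
  -- s = a'
  have hs0 : (1:ℤ) ≤ s := by omega
  have hsr : s < (r:ℤ) := by omega
  have ha'0 : (1:ℤ) ≤ (a':ℤ) := by exact_mod_cast h1'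
  have ha'r : (a':ℤ) < (r:ℤ) := by exact_mod_cast h2'
  have hdvd1 : (r:ℤ) ∣ (a:ℤ) * s - 1 := ⟨t, by rw [haq, ← hpr]; linarith [hdet]⟩
  have hk : a * a' = r * (a * a' / r) + 1 := by
    conv_lhs => rw [← Nat.div_add_mod (a * a') r, hinv]
  have hkZ : (a:ℤ) * (a':ℤ) = (r:ℤ) * ((a * a' / r : ℕ) : ℤ) + 1 := by
    exact_mod_cast hk
  have hdvd2 : (r:ℤ) ∣ (a:ℤ) * (a':ℤ) - 1 := ⟨(a * a' / r : ℕ), by linarith⟩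
  have hdvd3 : (r:ℤ) ∣ (a:ℤ) * (s - (a':ℤ)) := by
    have := dvd_sub hdvd1 hdvd2
    convert this using 1
    · rfl
    ring
  have hdvd4 : (r:ℤ) ∣ s - (a':ℤ) := hcopar.symm.dvd_of_dvd_mul_left hdvd3
  have hsa' : s = (a':ℤ) := by
    obtain ⟨c, hc⟩ := hdvd4
    have hc0 : c = 0 := by
      by_contra h
      rcases lt_or_gt_of_ne h with hneg | hpos
      · have := mul_le_mul_of_nonneg_left (show c ≤ -1 by omega) hr0.le
        linarith
      · have := mul_le_mul_of_nonneg_left (show (1:ℤ) ≤ c by omega) hr0.le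
        linarith
    rw [hc0, mul_zero] at hc
    linarith
  -- conclude using the reversed list
  obtain ⟨_, _, _, _, _, _, _, hcfr⟩ := pqst_main L.reverse
    (fun x hx => hL x (List.mem_reverse.mp hx)) (by simp [hne])
  rw [hcfr, pqst_reverse]
  rw [← hp, ← hs, hpr, hsa']
  push_cast
  ring
end

section
/- Let 1 ≤ a < r be coprime with I-series i_0 = r, i_1 = a, ..., i_{n+1} = 0 and continued fraction entries α_1, ..., α_n. In ℤ², set ρ_0 = (0,1), ρ_{n+1} = (r, −a), and define ρ_t = (1/i_{t−1})(ρ_{n+1} + i_t ρ_{t−1}) for t = 1, ..., n. Then each ρ_t lies in ℤ², and for all t = 1, ..., n one has ρ_{t−1} + ρ_{t+1} = α_t ρ_t. -/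
/-- The dual sequence: `jseq 0 = 0`, `jseq 1 = 1`,
`jseq (t+2) = α (t+1) * jseq (t+1) - jseq t`. -/
def jseq (α : ℕ → ℤ) : ℕ → ℤ
  | 0 => 0
  | 1 => 1
  | (t+2) => α (t+1) * jseq α (t+1) - jseq α t

/-- The primitive ray generators of the fan of the minimal resolution of the
cyclic quotient singularity `1/r(1,a)`: with `ρ 0 = (0,1)`, `ρ (n+1) = (r,-a)`,
and `ρ t = (1/i_{t-1})(ρ_{n+1} + i_t ρ_{t-1})`, each `ρ t` is integral, and
`ρ (t-1) + ρ (t+1) = α t • ρ t` for `1 ≤ t ≤ n`. -/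
theorem resolution_rays_integral (r a : ℤ) (h1 : 1 ≤ a) (h2 : a < r)
    (hcop : IsCoprime a r) (n : ℕ) (i α : ℕ → ℤ)
    (hi0 : i 0 = r) (hi1 : i 1 = a) (hin : i n = 1) (hin1 : i (n + 1) = 0)
    (hrec : ∀ t : ℕ, 2 ≤ t → t ≤ n + 1 →
      2 ≤ α (t - 1) ∧ i t = α (t - 1) * i (t - 1) - i (t - 2) ∧
        0 ≤ i t ∧ i t < i (t - 1)) :
    ∃ ρ : ℕ → ℤ × ℤ,
      ρ 0 = (0, 1) ∧ ρ (n + 1) = (r, -a) ∧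
      (∀ t : ℕ, 1 ≤ t → t ≤ n →
        i (t - 1) • ρ t = ρ (n + 1) + i t • ρ (t - 1)) ∧
      (∀ t : ℕ, 1 ≤ t → t ≤ n →
        ρ (t - 1) + ρ (t + 1) = α t • ρ t) := by
  have hrne : r ≠ 0 := by omega
  have hn : 1 ≤ n := by
    rcases Nat.eq_zero_or_pos n with h | h
    · exfalso; rw [h] at hin; omega
    · exact h
  set j := jseq α with hjdef
  have hj0 : j 0 = 0 := rfl
  have hj1 : j 1 = 1 := rfl
  have hjrec : ∀ t : ℕ, j (t + 2) = α (t + 1) * j (t + 1) - j t := fun t => rfl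
  -- divisibility: r ∣ i t - a * j t for t ≤ n + 1
  have hdvd : ∀ t : ℕ, t ≤ n → r ∣ (i t - a * j t) ∧ r ∣ (i (t+1) - a * j (t+1)) := by
    intro t
    induction t with
    | zero =>
      intro _
      constructor
      · rw [hi0, hj0]; exact ⟨1, by ring⟩
      · rw [hi1, hj1]; exact ⟨0, by ring⟩
    | succ t ih =>
      intro ht
      obtain ⟨ha, hb⟩ := ih (by omega)
      refine ⟨hb, ?_⟩
      obtain ⟨_, hirec, _, _⟩ := hrec (t + 2) (by omega) (by omega)
      simp only [show t + 2 - 1 = t + 1 from rfl, show t + 2 - 2 = t from rfl] at hirec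
      rw [hjrec, hirec]
      obtain ⟨c, hc⟩ := ha
      obtain ⟨c', hc'⟩ := hb
      exact ⟨α (t+1) * c' - c, by linear_combination α (t+1) * hc' - hc⟩
  -- determinant identity: i t * j (t+1) - i (t+1) * j t = r for t ≤ n
  have hd : ∀ t : ℕ, t ≤ n → i t * j (t+1) - i (t+1) * j t = r := by
    intro t
    induction t with
    | zero => intro _; rw [hi0, hi1, hj0, hj1]; ring
    | succ t ih =>
      intro ht
      have h' := ih (by omega)
      obtain ⟨_, hirec, _, _⟩ := hrec (t + 2) (by omega) (by omega)
      simp only [show t + 2 - 1 = t + 1 from rfl, show t + 2 - 2 = t from rfl] at hirec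
      rw [hjrec, hirec]
      linear_combination h'
  have hjn1 : j (n + 1) = r := by
    have := hd n le_rfl
    rw [hin, hin1] at this
    linarith
  refine ⟨fun t => (j t, (i t - a * j t) / r), ?_, ?_, ?_, ?_⟩
  · -- ρ 0 = (0, 1)
    simp only [Prod.mk.injEq]
    refine ⟨hj0, ?_⟩
    rw [hj0, hi0, show r - a * 0 = r by ring, Int.ediv_self hrne]
  · -- ρ (n+1) = (r, -a)
    simp only [Prod.mk.injEq]
    refine ⟨hjn1, ?_⟩
    rw [hjn1, hin1, show (0 : ℤ) - a * r = (-a) * r by ring,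
      Int.mul_ediv_cancel _ hrne]
  · -- i (t-1) • ρ t = ρ (n+1) + i t • ρ (t-1)
    intro t h1t h2t
    obtain ⟨s, rfl⟩ : ∃ s, t = s + 1 := ⟨t - 1, by omega⟩
    simp only [Nat.add_sub_cancel]
    obtain ⟨⟨c', hc'⟩, ⟨c, hc⟩⟩ := hdvd s (by omega)
    have hds := hd s (by omega)
    simp only [hjn1, hin1, hc, hc', Prod.smul_mk, Prod.mk_add_mk, smul_eq_mul,
      Int.mul_ediv_cancel_left _ hrne, Prod.mk.injEq,
      show (0 : ℤ) - a * r = (-a) * r by ring, Int.mul_ediv_cancel _ hrne]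
    constructor
    · linarith [hds]
    · have hr : r * (i s * c) = r * (-a + i (s+1) * c') := by
        linear_combination -(i s) * hc + i (s+1) * hc' - a * hds
      exact mul_left_cancel₀ hrne hr
  · -- ρ (t-1) + ρ (t+1) = α t • ρ t
    intro t h1t h2t
    obtain ⟨s, rfl⟩ : ∃ s, t = s + 1 := ⟨t - 1, by omega⟩
    simp only [Nat.add_sub_cancel]
    obtain ⟨⟨c0, hc0⟩, ⟨c1, hc1⟩⟩ := hdvd s (by omega)
    obtain ⟨_, ⟨c2, hc2⟩⟩ := hdvd (s + 1) (by omega)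
    obtain ⟨_, hirec, _, _⟩ := hrec (s + 2) (by omega) (by omega)
    simp only [show s + 2 - 1 = s + 1 from rfl, show s + 2 - 2 = s from rfl] at hirec
    simp only [hc0, hc1, hc2, Prod.smul_mk, Prod.mk_add_mk, smul_eq_mul,
      Int.mul_ediv_cancel_left _ hrne, Prod.mk.injEq]
    constructor
    · rw [hjrec]; ring
    · have hr : r * (c0 + c2) = r * (α (s+1) * c1) := by
        rw [hjrec] at hc2
        linear_combination -hc0 - hc2 + α (s+1) * hc1 + hirec
      exact mul_left_cancel₀ hrne hr
end

section
/- Let I^{1,7} be ℤ^8 with the bilinear form given by the diagonal matrix diag(1, −1, −1, −1, −1, −1, −1, −1), and let κ = (3, −1, −1, −1, −1, −1, −1, −1). Then the set of exceptional vectors, i.e. vectors v with v·κ = −1 and v·v = −1, has exactly 56 elements. -/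
/-- The bilinear form of the lattice `I^{1,7}`. -/
def qform (v w : Fin 8 → ℤ) : ℤ :=
  ∑ i : Fin 8, (if i = 0 then 1 else -1) * (v i * w i)

/-- The vector corresponding to the canonical class. -/
def kappa : Fin 8 → ℤ := fun i => if i = 0 then 3 else -1

/-- The list of the 56 exceptional vectors, as an explicit `Finset`. -/
def Elist : Finset (Fin 8 → ℤ) :=
  ⟨[![0,-1,0,0,0,0,0,0],
    ![0,0,-1,0,0,0,0,0],
    ![0,0,0,-1,0,0,0,0],
    ![0,0,0,0,-1,0,0,0],
    ![0,0,0,0,0,-1,0,0],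
    ![0,0,0,0,0,0,-1,0],
    ![0,0,0,0,0,0,0,-1],
    ![-1,1,1,0,0,0,0,0],
    ![-1,1,0,1,0,0,0,0],
    ![-1,1,0,0,1,0,0,0],
    ![-1,1,0,0,0,1,0,0],
    ![-1,1,0,0,0,0,1,0],
    ![-1,1,0,0,0,0,0,1],
    ![-1,0,1,1,0,0,0,0],
    ![-1,0,1,0,1,0,0,0],
    ![-1,0,1,0,0,1,0,0],
    ![-1,0,1,0,0,0,1,0],
    ![-1,0,1,0,0,0,0,1],
    ![-1,0,0,1,1,0,0,0],
    ![-1,0,0,1,0,1,0,0],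
    ![-1,0,0,1,0,0,1,0],
    ![-1,0,0,1,0,0,0,1],
    ![-1,0,0,0,1,1,0,0],
    ![-1,0,0,0,1,0,1,0],
    ![-1,0,0,0,1,0,0,1],
    ![-1,0,0,0,0,1,1,0],
    ![-1,0,0,0,0,1,0,1],
    ![-1,0,0,0,0,0,1,1],
    ![-2,1,1,1,1,1,0,0],
    ![-2,1,1,1,1,0,1,0],
    ![-2,1,1,1,1,0,0,1],
    ![-2,1,1,1,0,1,1,0],
    ![-2,1,1,1,0,1,0,1],
    ![-2,1,1,1,0,0,1,1],
    ![-2,1,1,0,1,1,1,0],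
    ![-2,1,1,0,1,1,0,1],
    ![-2,1,1,0,1,0,1,1],
    ![-2,1,1,0,0,1,1,1],
    ![-2,1,0,1,1,1,1,0],
    ![-2,1,0,1,1,1,0,1],
    ![-2,1,0,1,1,0,1,1],
    ![-2,1,0,1,0,1,1,1],
    ![-2,1,0,0,1,1,1,1],
    ![-2,0,1,1,1,1,1,0],
    ![-2,0,1,1,1,1,0,1],
    ![-2,0,1,1,1,0,1,1],
    ![-2,0,1,1,0,1,1,1],
    ![-2,0,1,0,1,1,1,1],
    ![-2,0,0,1,1,1,1,1],
    ![-3,2,1,1,1,1,1,1],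
    ![-3,1,2,1,1,1,1,1],
    ![-3,1,1,2,1,1,1,1],
    ![-3,1,1,1,2,1,1,1],
    ![-3,1,1,1,1,2,1,1],
    ![-3,1,1,1,1,1,2,1],
    ![-3,1,1,1,1,1,1,2]], by decide⟩

lemma qk (v : Fin 8 → ℤ) :
    qform v kappa = 3 * v 0 + (v 1 + v 2 + v 3 + v 4 + v 5 + v 6 + v 7) := by
  simp [qform, kappa, Fin.sum_univ_eight]; ring

lemma qs (v : Fin 8 → ℤ) :
    qform v v = v 0^2 - (v 1^2 + v 2^2 + v 3^2 + v 4^2 + v 5^2 + v 6^2 + v 7^2) := by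
  simp [qform, Fin.sum_univ_eight]; ring

lemma nnx (x : ℤ) : 0 ≤ x * (x - 1) := by
  rcases le_or_gt x 0 with h | h <;> nlinarith

lemma int01 {x : ℤ} (h : x * (x - 1) = 0) : x = 0 ∨ x = 1 := by
  rcases mul_eq_zero.mp h with h | h
  · exact Or.inl h
  · exact Or.inr (by omega)

lemma key7 (b1 b2 b3 b4 b5 b6 b7 : ℤ)
    (h : b1*(b1-1) + b2*(b2-1) + b3*(b3-1) + b4*(b4-1) + b5*(b5-1) + b6*(b6-1) + b7*(b7-1) = 0) :
    (b1 = 0 ∨ b1 = 1) ∧ (b2 = 0 ∨ b2 = 1) ∧ (b3 = 0 ∨ b3 = 1) ∧ (b4 = 0 ∨ b4 = 1) ∧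
    (b5 = 0 ∨ b5 = 1) ∧ (b6 = 0 ∨ b6 = 1) ∧ (b7 = 0 ∨ b7 = 1) := by
  have n1 := nnx b1; have n2 := nnx b2; have n3 := nnx b3; have n4 := nnx b4
  have n5 := nnx b5; have n6 := nnx b6; have n7 := nnx b7
  exact ⟨int01 (by linarith), int01 (by linarith), int01 (by linarith), int01 (by linarith),
    int01 (by linarith), int01 (by linarith), int01 (by linarith)⟩

lemma eq_vec {v : Fin 8 → ℤ} {c0 c1 c2 c3 c4 c5 c6 c7 : ℤ} (h0 : v 0 = c0) (h1 : v 1 = c1)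
    (h2 : v 2 = c2) (h3 : v 3 = c3) (h4 : v 4 = c4) (h5 : v 5 = c5) (h6 : v 6 = c6)
    (h7 : v 7 = c7) : v = ![c0,c1,c2,c3,c4,c5,c6,c7] := by
  funext i
  fin_cases i
  exacts [h0, h1, h2, h3, h4, h5, h6, h7]

set_option maxRecDepth 100000 in
set_option maxHeartbeats 1000000 in
lemma elist_mem : ∀ w ∈ Elist, qform w kappa = -1 ∧ qform w w = -1 := by decide

set_option maxRecDepth 100000 in
set_option maxHeartbeats 4000000 in
/-- There are exactly 56 exceptional vectors in `I^{1,7}`, corresponding to the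
56 `(-1)`-curves on a degree-two del Pezzo surface. -/
theorem card_exceptional_vectors :
    {v : Fin 8 → ℤ | qform v kappa = -1 ∧ qform v v = -1}.ncard = 56 := by
  have hset : {v : Fin 8 → ℤ | qform v kappa = -1 ∧ qform v v = -1} = ↑Elist := by
    ext v
    simp only [Set.mem_setOf_eq, Finset.mem_coe]
    constructor
    · rintro ⟨hk, hs⟩
      rw [qk] at hk
      rw [qs] at hs
      have hcs : (v 1 + v 2 + v 3 + v 4 + v 5 + v 6 + v 7)^2 ≤
          7 * (v 1^2 + v 2^2 + v 3^2 + v 4^2 + v 5^2 + v 6^2 + v 7^2) := by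
        linarith [sq_nonneg (v 1 - v 2), sq_nonneg (v 1 - v 3), sq_nonneg (v 1 - v 4), sq_nonneg (v 1 - v 5), sq_nonneg (v 1 - v 6), sq_nonneg (v 1 - v 7), sq_nonneg (v 2 - v 3), sq_nonneg (v 2 - v 4), sq_nonneg (v 2 - v 5), sq_nonneg (v 2 - v 6), sq_nonneg (v 2 - v 7), sq_nonneg (v 3 - v 4), sq_nonneg (v 3 - v 5), sq_nonneg (v 3 - v 6), sq_nonneg (v 3 - v 7), sq_nonneg (v 4 - v 5), sq_nonneg (v 4 - v 6), sq_nonneg (v 4 - v 7), sq_nonneg (v 5 - v 6), sq_nonneg (v 5 - v 7), sq_nonneg (v 6 - v 7)]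
      have h2 : (3 * v 0 + 1)^2 ≤ 7 * (v 0^2 + 1) := by
        calc (3 * v 0 + 1)^2 = (v 1 + v 2 + v 3 + v 4 + v 5 + v 6 + v 7)^2 := by
              rw [show 3 * v 0 + 1 = -(v 1 + v 2 + v 3 + v 4 + v 5 + v 6 + v 7) by linarith,
                neg_sq]
          _ ≤ 7 * (v 1^2 + v 2^2 + v 3^2 + v 4^2 + v 5^2 + v 6^2 + v 7^2) := hcs
          _ = 7 * (v 0^2 + 1) := by linarith
      have hb : -3 ≤ v 0 ∧ v 0 ≤ 0 := by
        constructor <;> nlinarith [h2, sq_nonneg (v 0 + 4), sq_nonneg (v 0 - 1)]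
      have ha : v 0 = 0 ∨ v 0 = -1 ∨ v 0 = -2 ∨ v 0 = -3 := by omega
      rcases ha with h0 | h0 | h0 | h0
      · have hsum : v 1 + v 2 + v 3 + v 4 + v 5 + v 6 + v 7 = -1 := by rw [h0] at hk; linarith
        have hq : v 1^2 + v 2^2 + v 3^2 + v 4^2 + v 5^2 + v 6^2 + v 7^2 = 1 := by
          rw [h0] at hs; linarith
        obtain ⟨d1,d2,d3,d4,d5,d6,d7⟩ := key7 (v 1 + 1) (v 2 + 1) (v 3 + 1) (v 4 + 1) (v 5 + 1) (v 6 + 1) (v 7 + 1) (by linear_combination hq + hsum)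
        have e1 : v 1 = -1 ∨ v 1 = 0 := by omega
        have e2 : v 2 = -1 ∨ v 2 = 0 := by omega
        have e3 : v 3 = -1 ∨ v 3 = 0 := by omega
        have e4 : v 4 = -1 ∨ v 4 = 0 := by omega
        have e5 : v 5 = -1 ∨ v 5 = 0 := by omega
        have e6 : v 6 = -1 ∨ v 6 = 0 := by omega
        have e7 : v 7 = -1 ∨ v 7 = 0 := by omega
        clear hk hs hcs h2 hb hq d1 d2 d3 d4 d5 d6 d7
        rcases e1 with h1|h1 <;> rcases e2 with h2|h2 <;> rcases e3 with h3|h3 <;>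
          rcases e4 with h4|h4 <;> rcases e5 with h5|h5 <;> rcases e6 with h6|h6 <;>
          rcases e7 with h7|h7 <;>
          first
          | omega
          | (rw [eq_vec h0 h1 h2 h3 h4 h5 h6 h7]; decide)
      · have hsum : v 1 + v 2 + v 3 + v 4 + v 5 + v 6 + v 7 = 2 := by rw [h0] at hk; linarith
        have hq : v 1^2 + v 2^2 + v 3^2 + v 4^2 + v 5^2 + v 6^2 + v 7^2 = 2 := by
          rw [h0] at hs; linarith
        obtain ⟨d1,d2,d3,d4,d5,d6,d7⟩ := key7 (v 1) (v 2) (v 3) (v 4) (v 5) (v 6) (v 7) (by linear_combination hq - hsum)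
        have e1 : v 1 = 0 ∨ v 1 = 1 := by omega
        have e2 : v 2 = 0 ∨ v 2 = 1 := by omega
        have e3 : v 3 = 0 ∨ v 3 = 1 := by omega
        have e4 : v 4 = 0 ∨ v 4 = 1 := by omega
        have e5 : v 5 = 0 ∨ v 5 = 1 := by omega
        have e6 : v 6 = 0 ∨ v 6 = 1 := by omega
        have e7 : v 7 = 0 ∨ v 7 = 1 := by omega
        clear hk hs hcs h2 hb hq d1 d2 d3 d4 d5 d6 d7
        rcases e1 with h1|h1 <;> rcases e2 with h2|h2 <;> rcases e3 with h3|h3 <;>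
          rcases e4 with h4|h4 <;> rcases e5 with h5|h5 <;> rcases e6 with h6|h6 <;>
          rcases e7 with h7|h7 <;>
          first
          | omega
          | (rw [eq_vec h0 h1 h2 h3 h4 h5 h6 h7]; decide)
      · have hsum : v 1 + v 2 + v 3 + v 4 + v 5 + v 6 + v 7 = 5 := by rw [h0] at hk; linarith
        have hq : v 1^2 + v 2^2 + v 3^2 + v 4^2 + v 5^2 + v 6^2 + v 7^2 = 5 := by
          rw [h0] at hs; linarith
        obtain ⟨d1,d2,d3,d4,d5,d6,d7⟩ := key7 (v 1) (v 2) (v 3) (v 4) (v 5) (v 6) (v 7) (by linear_combination hq - hsum)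
        have e1 : v 1 = 0 ∨ v 1 = 1 := by omega
        have e2 : v 2 = 0 ∨ v 2 = 1 := by omega
        have e3 : v 3 = 0 ∨ v 3 = 1 := by omega
        have e4 : v 4 = 0 ∨ v 4 = 1 := by omega
        have e5 : v 5 = 0 ∨ v 5 = 1 := by omega
        have e6 : v 6 = 0 ∨ v 6 = 1 := by omega
        have e7 : v 7 = 0 ∨ v 7 = 1 := by omega
        clear hk hs hcs h2 hb hq d1 d2 d3 d4 d5 d6 d7
        rcases e1 with h1|h1 <;> rcases e2 with h2|h2 <;> rcases e3 with h3|h3 <;>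
          rcases e4 with h4|h4 <;> rcases e5 with h5|h5 <;> rcases e6 with h6|h6 <;>
          rcases e7 with h7|h7 <;>
          first
          | omega
          | (rw [eq_vec h0 h1 h2 h3 h4 h5 h6 h7]; decide)
      · have hsum : v 1 + v 2 + v 3 + v 4 + v 5 + v 6 + v 7 = 8 := by rw [h0] at hk; linarith
        have hq : v 1^2 + v 2^2 + v 3^2 + v 4^2 + v 5^2 + v 6^2 + v 7^2 = 10 := by
          rw [h0] at hs; linarith
        obtain ⟨d1,d2,d3,d4,d5,d6,d7⟩ := key7 (v 1 - 1) (v 2 - 1) (v 3 - 1) (v 4 - 1) (v 5 - 1) (v 6 - 1) (v 7 - 1) (by linear_combination hq - 3*hsum)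
        have e1 : v 1 = 1 ∨ v 1 = 2 := by omega
        have e2 : v 2 = 1 ∨ v 2 = 2 := by omega
        have e3 : v 3 = 1 ∨ v 3 = 2 := by omega
        have e4 : v 4 = 1 ∨ v 4 = 2 := by omega
        have e5 : v 5 = 1 ∨ v 5 = 2 := by omega
        have e6 : v 6 = 1 ∨ v 6 = 2 := by omega
        have e7 : v 7 = 1 ∨ v 7 = 2 := by omega
        clear hk hs hcs h2 hb hq d1 d2 d3 d4 d5 d6 d7
        rcases e1 with h1|h1 <;> rcases e2 with h2|h2 <;> rcases e3 with h3|h3 <;>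
          rcases e4 with h4|h4 <;> rcases e5 with h5|h5 <;> rcases e6 with h6|h6 <;>
          rcases e7 with h7|h7 <;>
          first
          | omega
          | (rw [eq_vec h0 h1 h2 h3 h4 h5 h6 h7]; decide)
    · intro h
      exact elist_mem v h
  rw [hset, Set.ncard_coe_finset]
  rfl
end
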